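/- Lemma 6.2(d) (removing a middle black bead from a string). Let J ≥ 1 and let l be a string of beads with three black positions v₁ < v₂ < v₃ such that the open interval of positions (v₁, v₃) contains at most J black positions, the open interval (v₁, v₂) contains exactly m₁ white positions, and the open interval (v₂, v₃) contains exactly m₂ white positions. If l' = l.eraseIdx v₂ is obtained from l by removing the bead at position v₂, then μ_J^c(l') ≤ μ_J^c(l) − m₁·m₂. -/

import Mathlib

namespace BeadString

/-- An entry `false` of a string of beads is a white bead, an entry `true` is a black
bead. -/
def IsWhite (l : List Bool) (p : Fin l.length) : Prop := l.get p = false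

def IsBlack (l : List Bool) (p : Fin l.length) : Prop := l.get p = true

instance (l : List Bool) (p : Fin l.length) : Decidable (IsWhite l p) :=
  inferInstanceAs (Decidable (l.get p = false))

instance (l : List Bool) (p : Fin l.length) : Decidable (IsBlack l p) :=
  inferInstanceAs (Decidable (l.get p = true))

/-- The number of black beads strictly between the positions `i` and `j`. -/
def blackBetween (l : List Bool) (i j : Fin l.length) : ℕ :=
  (Finset.univ.filter fun p : Fin l.length => i < p ∧ p < j ∧ IsBlack l p).card

/-- The number of white beads strictly between the positions `i` and `j`. -/
def whiteBetween (l : List Bool) (i j : Fin l.length) : ℕ :=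
  (Finset.univ.filter fun p : Fin l.length => i < p ∧ p < j ∧ IsWhite l p).card

/-- `P l k` is the set of pairs `(i, j)` of white beads with `i < j` separated by at
least `k` black beads. -/
def P (l : List Bool) (k : ℕ) : Finset (Fin l.length × Fin l.length) :=
  Finset.univ.filter fun q : Fin l.length × Fin l.length =>
    q.1 < q.2 ∧ IsWhite l q.1 ∧ IsWhite l q.2 ∧ k ≤ blackBetween l q.1 q.2

/-- The `J`-mixture `μ_J^c(l)` of the string of beads `l`. -/
def mixture (J : ℕ) (l : List Bool) : ℕ := ∑ k ∈ Finset.Icc 1 J, (P l k).card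

/-- The number of white beads of `l`. -/
def whiteCount (l : List Bool) : ℕ := l.count false

/-! ### Auxiliary material -/

/-- The set of pairs of white beads `(i,j)` with `i < j`. -/
def Wp (l : List Bool) : Finset (Fin l.length × Fin l.length) :=
  Finset.univ.filter fun q : Fin l.length × Fin l.length =>
    q.1 < q.2 ∧ IsWhite l q.1 ∧ IsWhite l q.2

lemma sum_ite_min (J b : ℕ) :
    ∑ k ∈ Finset.Icc 1 J, (if k ≤ b then (1 : ℕ) else 0) = min J b := by
  classical
  rw [← Finset.card_filter]
  have h : (Finset.Icc 1 J).filter (fun k => k ≤ b) = Finset.Icc 1 (min J b) := by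
    ext k
    simp only [Finset.mem_filter, Finset.mem_Icc]
    omega
  rw [h, Nat.card_Icc]
  omega

lemma mixture_eq (J : ℕ) (l : List Bool) :
    mixture J l = ∑ q ∈ Wp l, min J (blackBetween l q.1 q.2) := by
  classical
  have h1 : ∀ k, P l k = (Wp l).filter fun q => k ≤ blackBetween l q.1 q.2 := by
    intro k
    unfold P Wp
    rw [Finset.filter_filter]
    apply Finset.filter_congr
    intro q _
    tauto
  unfold mixture
  calc ∑ k ∈ Finset.Icc 1 J, (P l k).card
      = ∑ k ∈ Finset.Icc 1 J, ∑ q ∈ Wp l,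
          (if k ≤ blackBetween l q.1 q.2 then (1 : ℕ) else 0) := by
        refine Finset.sum_congr rfl fun k _ => ?_
        rw [h1 k, Finset.card_filter]
    _ = ∑ q ∈ Wp l, ∑ k ∈ Finset.Icc 1 J,
          (if k ≤ blackBetween l q.1 q.2 then (1 : ℕ) else 0) := Finset.sum_comm
    _ = ∑ q ∈ Wp l, min J (blackBetween l q.1 q.2) := by
        refine Finset.sum_congr rfl fun q _ => ?_
        exact sum_ite_min _ _

lemma count_aux (n v : ℕ) (hv : v < n) (Q : Fin n → Prop) [DecidablePred Q] :
    (Finset.univ.filter Q).card =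
      (Finset.univ.filter fun p : Fin (n-1) =>
        Q ⟨if (p:ℕ) < v then (p:ℕ) else (p:ℕ)+1, by have := p.2; split <;> omega⟩).card
      + (if Q ⟨v, hv⟩ then 1 else 0) := by
  obtain ⟨m, rfl⟩ : ∃ m, n = m + 1 := ⟨n-1, by omega⟩
  simp only [Finset.card_filter]
  rw [Fin.sum_univ_succAbove (fun i => if Q i then 1 else 0) ⟨v, hv⟩, add_comm]
  congr 1
  refine Finset.sum_congr rfl fun i _ => ?_
  congr 2
  apply Fin.ext
  simp only [Fin.succAbove, Fin.lt_def, Fin.coe_castSucc, Fin.val_succ]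
  split <;> simp

lemma emb_lt (l : List Bool) (v : Fin l.length) (p : Fin (l.eraseIdx (v:ℕ)).length) :
    (if (p:ℕ) < (v:ℕ) then (p:ℕ) else (p:ℕ)+1) < l.length := by
  have hlen : (l.eraseIdx (v:ℕ)).length = l.length - 1 := by
    rw [List.length_eraseIdx]
    simp [v.2]
  have hp : (p:ℕ) < l.length - 1 := lt_of_lt_of_eq p.2 hlen
  have hv := v.2
  split <;> omega

/-- The canonical embedding of positions after erasing position `v`. -/
def emb (l : List Bool) (v : Fin l.length) (p : Fin (l.eraseIdx (v:ℕ)).length) :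
    Fin l.length :=
  ⟨if (p:ℕ) < (v:ℕ) then (p:ℕ) else (p:ℕ)+1, emb_lt l v p⟩

lemma count_aux' (l : List Bool) (v : Fin l.length) (Q : Fin l.length → Prop)
    [DecidablePred Q] :
    (Finset.univ.filter Q).card =
      (Finset.univ.filter fun p : Fin (l.eraseIdx (v:ℕ)).length => Q (emb l v p)).card
      + (if Q v then 1 else 0) := by
  have hlen : (l.eraseIdx (v:ℕ)).length = l.length - 1 := by
    rw [List.length_eraseIdx]
    simp [v.2]
  rw [count_aux l.length (v:ℕ) v.2 Q]
  have hv : (⟨(v:ℕ), v.2⟩ : Fin l.length) = v := rfl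
  rw [hv]
  congr 1
  simp only [Finset.card_filter]
  refine (Fintype.sum_equiv (finCongr hlen) _ _ fun p => ?_).symm
  rfl

lemma emb_val (l : List Bool) (v : Fin l.length) (p : Fin (l.eraseIdx (v:ℕ)).length) :
    ((emb l v p : Fin l.length) : ℕ) = if (p:ℕ) < (v:ℕ) then (p:ℕ) else (p:ℕ)+1 := rfl

lemma get_emb (l : List Bool) (v : Fin l.length) (p : Fin (l.eraseIdx (v:ℕ)).length) :
    (l.eraseIdx (v:ℕ)).get p = l.get (emb l v p) := by
  have h1 := List.getElem_eraseIdx p.2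
  simp only [List.get_eq_getElem, h1]
  by_cases hc : (p:ℕ) < (v:ℕ)
  · simp only [hc, dif_pos]
    congr 1
    simp [emb_val, hc]
  · simp only [hc, dif_neg, not_false_iff]
    congr 1
    simp [emb_val, hc]

lemma emb_lt_iff (l : List Bool) (v : Fin l.length)
    (p q : Fin (l.eraseIdx (v:ℕ)).length) : emb l v p < emb l v q ↔ p < q := by
  simp only [Fin.lt_def, emb_val]
  split <;> split <;> omega

lemma emb_inj (l : List Bool) (v : Fin l.length) :
    Function.Injective (emb l v) := by
  intro p q h
  apply Fin.ext
  have := congrArg (fun x : Fin l.length => (x : ℕ)) h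
  simp only [emb_val] at this
  split at this <;> split at this <;> omega

lemma emb_ne (l : List Bool) (v : Fin l.length) (p : Fin (l.eraseIdx (v:ℕ)).length) :
    emb l v p ≠ v := by
  intro h
  have := congrArg (fun x : Fin l.length => (x : ℕ)) h
  simp only [emb_val] at this
  split at this <;> omega

/-- Lemma 6.2(d): if `v₁ < v₂ < v₃` are black beads such that the open interval
`(v₁, v₃)` contains at most `J` black beads, and the open intervals `(v₁, v₂)` and
`(v₂, v₃)` contain `m₁` and `m₂` white beads respectively, then removing `v₂` decreases
`μ_J^c` by at least `m₁·m₂`. -/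
theorem mixture_erase_middle_black (J : ℕ) (hJ : 1 ≤ J) (l : List Bool)
    (v₁ v₂ v₃ : Fin l.length) (h12 : v₁ < v₂) (h23 : v₂ < v₃)
    (hb₁ : IsBlack l v₁) (hb₂ : IsBlack l v₂) (hb₃ : IsBlack l v₃)
    (harc : blackBetween l v₁ v₃ ≤ J)
    (m₁ m₂ : ℕ) (hm₁ : m₁ = whiteBetween l v₁ v₂) (hm₂ : m₂ = whiteBetween l v₂ v₃) :
    mixture J (l.eraseIdx (v₂ : ℕ)) + m₁ * m₂ ≤ mixture J l := by
  classical
  set g := emb l v₂ with hg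
  -- whiteness and blackness transfer
  have hwhite : ∀ p, IsWhite (l.eraseIdx (v₂:ℕ)) p ↔ IsWhite l (g p) := by
    intro p
    unfold IsWhite
    rw [get_emb l v₂ p]
  have hblack : ∀ p, IsBlack (l.eraseIdx (v₂:ℕ)) p ↔ IsBlack l (g p) := by
    intro p
    unfold IsBlack
    rw [get_emb l v₂ p]
  -- blackBetween transfer
  have hB : ∀ p q : Fin (l.eraseIdx (v₂:ℕ)).length,
      blackBetween l (g p) (g q) =
        blackBetween (l.eraseIdx (v₂:ℕ)) p q +
          (if g p < v₂ ∧ v₂ < g q then 1 else 0) := by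
    intro p q
    unfold blackBetween
    rw [count_aux' l v₂ (fun r => g p < r ∧ r < g q ∧ IsBlack l r)]
    congr 1
    · congr 1
      apply Finset.filter_congr
      intro r _
      rw [emb_lt_iff, emb_lt_iff, hblack r]
    · congr 1
      simp only [eq_iff_iff]
      constructor
      · rintro ⟨h1, h2, _⟩; exact ⟨h1, h2⟩
      · rintro ⟨h1, h2⟩; exact ⟨h1, h2, hb₂⟩
  -- white counts transfer
  have hW1 : m₁ = (Finset.univ.filter fun p : Fin (l.eraseIdx (v₂:ℕ)).length =>
      v₁ < g p ∧ g p < v₂ ∧ IsWhite l (g p)).card := by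
    rw [hm₁]
    unfold whiteBetween
    rw [count_aux' l v₂ (fun r => v₁ < r ∧ r < v₂ ∧ IsWhite l r)]
    simp [lt_irrefl]
    rfl
  have hW2 : m₂ = (Finset.univ.filter fun p : Fin (l.eraseIdx (v₂:ℕ)).length =>
      v₂ < g p ∧ g p < v₃ ∧ IsWhite l (g p)).card := by
    rw [hm₂]
    unfold whiteBetween
    rw [count_aux' l v₂ (fun r => v₂ < r ∧ r < v₃ ∧ IsWhite l r)]
    simp [lt_irrefl]
    rfl
  -- the "special" predicate
  set D : Fin (l.eraseIdx (v₂:ℕ)).length × Fin (l.eraseIdx (v₂:ℕ)).length → Prop :=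
    fun q => (v₁ < g q.1 ∧ g q.1 < v₂ ∧ IsWhite l (g q.1)) ∧
      (v₂ < g q.2 ∧ g q.2 < v₃ ∧ IsWhite l (g q.2)) with hD
  have hm12 : m₁ * m₂ = (Finset.univ.filter D).card := by
    rw [hW1, hW2, ← Finset.card_product, ← Finset.filter_product, Finset.univ_product_univ]
  -- D implies membership in Wp
  have hDW : ∀ q, D q → q ∈ Wp (l.eraseIdx (v₂:ℕ)) := by
    rintro q ⟨⟨_, h2, h3⟩, ⟨h4, _, h6⟩⟩
    simp only [Wp, Finset.mem_filter, Finset.mem_univ, true_and]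
    refine ⟨?_, (hwhite q.1).2 h3, (hwhite q.2).2 h6⟩
    rw [← emb_lt_iff l v₂]
    exact lt_trans h2 h4
  have hcardD : (Finset.univ.filter D).card =
      ∑ q ∈ Wp (l.eraseIdx (v₂:ℕ)), (if D q then 1 else 0) := by
    rw [Finset.card_filter]
    refine (Finset.sum_subset (Finset.subset_univ _) fun q _ hq => ?_).symm
    simp only [ite_eq_right_iff]
    intro hDq
    exact absurd (hDW q hDq) hq
  -- pointwise inequality
  have hpoint : ∀ q ∈ Wp (l.eraseIdx (v₂:ℕ)),
      min J (blackBetween (l.eraseIdx (v₂:ℕ)) q.1 q.2) + (if D q then 1 else 0) ≤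
        min J (blackBetween l (g q.1) (g q.2)) := by
    intro q _
    by_cases hq : D q
    · rw [if_pos hq]
      obtain ⟨⟨ha1, ha2, _⟩, ⟨hb1, hb2, _⟩⟩ := hq
      have hbetween : g q.1 < v₂ ∧ v₂ < g q.2 := ⟨ha2, hb1⟩
      have hBq := hB q.1 q.2
      rw [if_pos hbetween] at hBq
      have hle : blackBetween l (g q.1) (g q.2) ≤ blackBetween l v₁ v₃ := by
        apply Finset.card_le_card
        intro r hr
        simp only [Finset.mem_filter, Finset.mem_univ, true_and] at hr ⊢
        exact ⟨lt_trans ha1 hr.1, lt_trans hr.2.1 hb2, hr.2.2⟩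
      have hJb : blackBetween l (g q.1) (g q.2) ≤ J := le_trans hle harc
      rw [min_eq_right hJb]
      have : min J (blackBetween (l.eraseIdx (v₂:ℕ)) q.1 q.2) ≤
          blackBetween (l.eraseIdx (v₂:ℕ)) q.1 q.2 := min_le_right _ _
      omega
    · rw [if_neg hq, add_zero]
      refine min_le_min le_rfl ?_
      rw [hB q.1 q.2]
      omega
  -- now the sum chain
  rw [mixture_eq J (l.eraseIdx (v₂:ℕ)), mixture_eq J l, hm12, hcardD,
    ← Finset.sum_add_distrib]
  set G : Fin (l.eraseIdx (v₂:ℕ)).length × Fin (l.eraseIdx (v₂:ℕ)).length →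
      Fin l.length × Fin l.length := fun q => (g q.1, g q.2) with hG
  have hGinj : ∀ a ∈ Wp (l.eraseIdx (v₂:ℕ)), ∀ b ∈ Wp (l.eraseIdx (v₂:ℕ)),
      G a = G b → a = b := by
    intro a _ b _ h
    have h1 : g a.1 = g b.1 := congrArg Prod.fst h
    have h2 : g a.2 = g b.2 := congrArg Prod.snd h
    exact Prod.ext (emb_inj l v₂ h1) (emb_inj l v₂ h2)
  calc ∑ q ∈ Wp (l.eraseIdx (v₂:ℕ)),
        (min J (blackBetween (l.eraseIdx (v₂:ℕ)) q.1 q.2) + if D q then 1 else 0)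
      ≤ ∑ q ∈ Wp (l.eraseIdx (v₂:ℕ)), min J (blackBetween l (g q.1) (g q.2)) :=
        Finset.sum_le_sum hpoint
    _ = ∑ q ∈ (Wp (l.eraseIdx (v₂:ℕ))).image G, min J (blackBetween l q.1 q.2) :=
        by rw [Finset.sum_image hGinj]
    _ ≤ ∑ q ∈ Wp l, min J (blackBetween l q.1 q.2) := by
        apply Finset.sum_le_sum_of_subset
        intro q hq
        simp only [Finset.mem_image] at hq
        obtain ⟨a, ha, rfl⟩ := hq
        simp only [Wp, Finset.mem_filter, Finset.mem_univ, true_and] at ha ⊢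
        exact ⟨(emb_lt_iff l v₂ a.1 a.2).2 ha.1, (hwhite a.1).1 ha.2.1,
          (hwhite a.2).1 ha.2.2⟩

end BeadString
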